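/- Fix real numbers λ > ρ > 0, let f(x, y) = (1/2)(|x| + |y|)² − (ρ/2)x² on ℝ², and let S(x, y) = prox_{(1/λ)f}(x, y) denote the unique minimizer of (u, v) ↦ f(u, v) + (λ/2)((u − x)² + (v − y)²). Fix α ∈ (0, 1] and define T = (1 − α)I + αS. Then the cone K = { (x, y) ∈ ℝ² : |x| ≤ y/(1 + λ) } satisfies T(K) ⊆ K, and for every (x, y) ∈ K and every k ≥ 0, T^k(x, y) = ((1 − α)^k x, (1 − α/(1 + λ))^k y); in particular the iterates T^k(x, y) converge linearly to the origin as k → ∞. -/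

import Mathlib

open Set Filter Topology

/-- The pathological function `f(x, y) = (1/2)(|x| + |y|)² − (ρ/2)x²` on the plane. -/
noncomputable def pathologicalFun (ρ : ℝ) (p : ℝ × ℝ) : ℝ :=
  1 / 2 * (|p.1| + |p.2|) ^ 2 - ρ / 2 * p.1 ^ 2

set_option maxHeartbeats 1000000

lemma prox_on_cone (lam ρ : ℝ) (hρ : 0 < ρ) (hlam : ρ < lam)
    (S : ℝ × ℝ → ℝ × ℝ)
    (hS : ∀ p w : ℝ × ℝ,
      pathologicalFun ρ (S p) + lam / 2 * (((S p).1 - p.1) ^ 2 + ((S p).2 - p.2) ^ 2) ≤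
      pathologicalFun ρ w + lam / 2 * ((w.1 - p.1) ^ 2 + (w.2 - p.2) ^ 2))
    (p : ℝ × ℝ) (hp : |p.1| ≤ p.2 / (1 + lam)) :
    S p = (0, lam / (1 + lam) * p.2) := by
  have h1l : (0:ℝ) < 1 + lam := by linarith
  set z : ℝ := p.2 / (1 + lam) with hzdef
  have hz0 : 0 ≤ z := le_trans (abs_nonneg _) hp
  have hy : p.2 = (1 + lam) * z := by rw [hzdef]; field_simp
  set u : ℝ := (S p).1 with hudef
  set v : ℝ := (S p).2 with hvdef
  have key := hS p (0, lam * z)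
  simp only [pathologicalFun, ← hudef, ← hvdef] at key
  rw [hy] at key
  have hlam0 : (0:ℝ) < lam := lt_trans hρ hlam
  rw [abs_zero, abs_of_nonneg (mul_nonneg hlam0.le hz0)] at key
  -- facts about abs
  have habs_u : |u| ^ 2 = u ^ 2 := sq_abs u
  have h1 : |u| * v ≤ |u| * |v| := mul_le_mul_of_nonneg_left (le_abs_self v) (abs_nonneg u)
  have h2 : u * p.1 ≤ |u| * z := by
    calc u * p.1 ≤ |u * p.1| := le_abs_self _
      _ = |u| * |p.1| := abs_mul _ _
      _ ≤ |u| * z := mul_le_mul_of_nonneg_left hp (abs_nonneg u)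
  have h2' : lam * (u * p.1) ≤ lam * (|u| * z) := mul_le_mul_of_nonneg_left h2 hlam0.le
  have step1 : (1 + lam - ρ)/2 * u^2 + |u| * (v - lam * z) + (1 + lam)/2 * (v - lam*z)^2 ≤ 0 := by
    nlinarith [key, h1, h2', habs_u, sq_abs v]
  have step2 : (1 + lam) * ((1 + lam - ρ)/2 * u^2 + |u| * (v - lam * z) + (1 + lam)/2 * (v - lam*z)^2) ≤ 0 :=
    mul_nonpos_of_nonneg_of_nonpos h1l.le step1
  have hcoef : 0 < (1 + lam) * (1 + lam - ρ) - 1 := by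
    nlinarith [mul_pos h1l (sub_pos.mpr hlam), hlam0]
  have hu2' : ((1 + lam) * (1 + lam - ρ) - 1) * u^2 ≤ 0 := by
    nlinarith [step2, sq_nonneg ((1 + lam) * (v - lam * z) + |u|), habs_u]
  have hu2 : u ^ 2 ≤ 0 := by
    nlinarith [hu2', hcoef, sq_nonneg u]
  have hu : u = 0 := by
    have := sq_nonneg u
    have : u ^ 2 = 0 := le_antisymm hu2 this
    exact pow_eq_zero_iff (by norm_num) |>.mp this
  rw [hu] at key
  rw [abs_zero] at key
  have hv2 : (v - lam * z) ^ 2 ≤ 0 := by nlinarith [sq_abs v]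
  have hv : v = lam * z := by
    have : (v - lam * z) ^ 2 = 0 := le_antisymm hv2 (sq_nonneg _)
    have := pow_eq_zero_iff (two_ne_zero) |>.mp this
    linarith
  have : lam * z = lam / (1 + lam) * p.2 := by rw [hy]; field_simp
  rw [Prod.ext_iff]
  exact ⟨hu, by rw [← hvdef, hv, this]⟩


/-- Convergence to saddles: Let `λ > ρ > 0`, let `S` be the proximal map
`prox_{(1/λ)f}` of the pathological function (characterized by the minimizing property), fix
`α ∈ (0,1]`, and set `T = (1 − α)I + αS`. Then the cone `K = {(x,y) : |x| ≤ y/(1+λ)}` is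
invariant under `T`, and for `(x,y) ∈ K` the iterates satisfy
`T^k(x,y) = ((1 − α)^k x, (1 − α(1 − λ/(1+λ)))^k y)` and converge (linearly) to the origin. -/
theorem pathological_convergence_to_saddle (lam ρ : ℝ) (hρ : 0 < ρ) (hlam : ρ < lam)
    (S : ℝ × ℝ → ℝ × ℝ)
    (hS : ∀ p w : ℝ × ℝ,
      pathologicalFun ρ (S p) + lam / 2 * (((S p).1 - p.1) ^ 2 + ((S p).2 - p.2) ^ 2) ≤
      pathologicalFun ρ w + lam / 2 * ((w.1 - p.1) ^ 2 + (w.2 - p.2) ^ 2))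
    (α : ℝ) (hα : α ∈ Set.Ioc (0 : ℝ) 1) :
    Set.MapsTo (fun p : ℝ × ℝ => (1 - α) • p + α • S p)
      {p : ℝ × ℝ | |p.1| ≤ p.2 / (1 + lam)}
      {p : ℝ × ℝ | |p.1| ≤ p.2 / (1 + lam)} ∧
    ∀ p ∈ {p : ℝ × ℝ | |p.1| ≤ p.2 / (1 + lam)},
      (∀ k : ℕ, (fun p : ℝ × ℝ => (1 - α) • p + α • S p)^[k] p =
        ((1 - α) ^ k * p.1, (1 - α * (1 - lam / (1 + lam))) ^ k * p.2)) ∧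
      Filter.Tendsto (fun k => (fun p : ℝ × ℝ => (1 - α) • p + α • S p)^[k] p)
        Filter.atTop (nhds (0, 0)) := by
  obtain ⟨hα0, hα1⟩ := hα
  have hlam0 : (0:ℝ) < lam := lt_trans hρ hlam
  have h1l : (0:ℝ) < 1 + lam := by linarith
  set T : ℝ × ℝ → ℝ × ℝ := fun p : ℝ × ℝ => (1 - α) • p + α • S p with hT
  set c : ℝ := 1 - α with hc
  set β : ℝ := 1 - α * (1 - lam / (1 + lam)) with hβ
  have hβ' : β = 1 - α / (1 + lam) := by rw [hβ]; field_simp; ring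
  have hc0 : 0 ≤ c := by rw [hc]; linarith
  have hc1 : c < 1 := by rw [hc]; linarith
  have hβ1 : β < 1 := by
    rw [hβ']
    have : 0 < α / (1 + lam) := div_pos hα0 h1l
    linarith
  have hβ0 : 0 < β := by
    rw [hβ']
    have : α / (1 + lam) < 1 := by
      rw [div_lt_one h1l]; linarith
    linarith
  have hcβ : c ≤ β := by
    rw [hc, hβ']
    have : α / (1 + lam) ≤ α := by
      rw [div_le_iff₀ h1l]; nlinarith
    linarith
  -- action of T on K
  have hTK : ∀ p : ℝ × ℝ, |p.1| ≤ p.2 / (1 + lam) → T p = (c * p.1, β * p.2) := by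
    intro p hp
    have hSp := prox_on_cone lam ρ hρ hlam S hS p hp
    rw [hT]
    simp only [hSp, Prod.smul_def, smul_eq_mul, Prod.mk_add_mk, Prod.ext_iff, Prod.fst_add,
      Prod.snd_add, Prod.fst, Prod.snd]
    constructor
    · rw [hc]; ring
    · rw [hβ']; field_simp; ring
  -- membership of the closed-form points
  have hmem : ∀ p : ℝ × ℝ, |p.1| ≤ p.2 / (1 + lam) → ∀ k : ℕ,
      |((c ^ k * p.1, β ^ k * p.2) : ℝ × ℝ).1| ≤ ((c ^ k * p.1, β ^ k * p.2) : ℝ × ℝ).2 / (1 + lam) := by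
    intro p hp k
    have hck : 0 ≤ c ^ k := pow_nonneg hc0 k
    have hcβk : c ^ k ≤ β ^ k := pow_le_pow_left₀ hc0 hcβ k
    have hz0 : 0 ≤ p.2 / (1 + lam) := le_trans (abs_nonneg _) hp
    calc |c ^ k * p.1| = c ^ k * |p.1| := by rw [abs_mul, abs_of_nonneg hck]
      _ ≤ c ^ k * (p.2 / (1 + lam)) := mul_le_mul_of_nonneg_left hp hck
      _ ≤ β ^ k * (p.2 / (1 + lam)) := mul_le_mul_of_nonneg_right hcβk hz0
      _ = β ^ k * p.2 / (1 + lam) := by ring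
  have hmaps : Set.MapsTo T {p : ℝ × ℝ | |p.1| ≤ p.2 / (1 + lam)}
      {p : ℝ × ℝ | |p.1| ≤ p.2 / (1 + lam)} := by
    intro p hp
    rw [Set.mem_setOf_eq] at hp ⊢
    rw [hTK p hp]
    simpa using hmem p hp 1
  refine ⟨hmaps, fun p hp => ?_⟩
  rw [Set.mem_setOf_eq] at hp
  have hiter : ∀ k : ℕ, T^[k] p = (c ^ k * p.1, β ^ k * p.2) := by
    intro k
    induction k with
    | zero => simp
    | succ k ih =>
      rw [Function.iterate_succ_apply', ih, hTK _ (hmem p hp k)]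
      simp only [Prod.mk.injEq]
      constructor <;> ring
  refine ⟨hiter, ?_⟩
  rw [tendsto_congr hiter]
  have h1 : Filter.Tendsto (fun k : ℕ => c ^ k * p.1) Filter.atTop (nhds 0) := by
    have := (tendsto_pow_atTop_nhds_zero_of_abs_lt_one
      (by rw [abs_of_nonneg hc0]; exact hc1)).mul_const p.1
    simpa using this
  have h2 : Filter.Tendsto (fun k : ℕ => β ^ k * p.2) Filter.atTop (nhds 0) := by
    have := (tendsto_pow_atTop_nhds_zero_of_abs_lt_one
      (by rw [abs_of_nonneg hβ0.le]; exact hβ1)).mul_const p.2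
    simpa using this
  exact Filter.Tendsto.prodMk_nhds h1 h2
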